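/- One-sided radius bound (Step 1 of Theorem 3.3): under the hypotheses that for every closed ball B, P(B) ≥ p + ε implies Q(B) ≥ p (with ε = β² + β√p), and the regularity assumption that |P(B(x, r_p(x)+η)) − P(B(x, r_p(x)))| ≤ ε implies |η| < Cε, one has r̂_p(x) ≤ r_p(x) + Cε for every x. -/

import Mathlib

open MeasureTheory Metric Set

noncomputable def rad {d : ℕ} (P : Measure (EuclideanSpace ℝ (Fin d))) (p : ℝ)
    (x : EuclideanSpace ℝ (Fin d)) : ℝ :=
  sInf {r : ℝ | 0 < r ∧ p ≤ (P (closedBall x r)).toReal}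

lemma rad_nonempty {d : ℕ} (P : Measure (EuclideanSpace ℝ (Fin d)))
    [IsProbabilityMeasure P] (p : ℝ) (hp : p < 1) (x : EuclideanSpace ℝ (Fin d)) :
    {r : ℝ | 0 < r ∧ p ≤ (P (closedBall x r)).toReal}.Nonempty := by
  have hmono : Monotone (fun n : ℕ => closedBall x (n + 1 : ℝ)) := fun i j hij => by
    apply closedBall_subset_closedBall; exact_mod_cast by omega
  have hU : ⋃ n : ℕ, closedBall x (n + 1 : ℝ) = univ := by
    ext y; simp only [mem_iUnion, mem_closedBall, mem_univ, iff_true]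
    obtain ⟨n, hn⟩ := exists_nat_ge (dist y x)
    exact ⟨n, hn.trans (by linarith)⟩
  have := MeasureTheory.tendsto_measure_iUnion_atTop (μ := P) hmono
  rw [hU, measure_univ] at this
  have h2 : Filter.Tendsto (fun n : ℕ => (P (closedBall x (n + 1 : ℝ))).toReal)
      Filter.atTop (nhds 1) := by
    have := (ENNReal.tendsto_toReal (by simp)).comp this
    simpa [Function.comp_def] using this
  obtain ⟨n, hn⟩ := (h2.eventually (eventually_ge_nhds hp)).exists
  exact ⟨(n : ℝ) + 1, by positivity, hn⟩

lemma rad_mem {d : ℕ} (P : Measure (EuclideanSpace ℝ (Fin d)))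
    [IsProbabilityMeasure P] (p : ℝ) (hp : p < 1) (x : EuclideanSpace ℝ (Fin d)) :
    p ≤ (P (closedBall x (rad P p x))).toReal := by
  set S := {r : ℝ | 0 < r ∧ p ≤ (P (closedBall x r)).toReal} with hS
  have hne := rad_nonempty P p hp x
  have hbdd : BddBelow S := ⟨0, fun r hr => hr.1.le⟩
  have hr0 : 0 ≤ rad P p x := le_csInf hne fun r hr => hr.1.le
  -- for all δ > 0, p ≤ P(closedBall x (rad + δ)).toReal
  have key : ∀ δ > (0:ℝ), p ≤ (P (closedBall x (rad P p x + δ))).toReal := by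
    intro δ hδ
    obtain ⟨s, hs, hlt⟩ := Real.lt_sInf_add_pos hne hδ
    refine hs.2.trans (ENNReal.toReal_mono (by simp [measure_ne_top]) (measure_mono ?_))
    exact closedBall_subset_closedBall hlt.le
  have hlim : Filter.Tendsto (fun δ : ℝ => (P (cthickening δ (closedBall x (rad P p x)))).toReal)
      (nhds 0) (nhds (P (closedBall x (rad P p x))).toReal) := by
    exact (ENNReal.tendsto_toReal (measure_ne_top _ _)).comp
      (tendsto_measure_cthickening_of_isClosed ⟨1, one_pos, measure_ne_top _ _⟩
        Metric.isClosed_closedBall)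
  refine ge_of_tendsto (hlim.mono_left (nhdsWithin_le_nhds (s := Ioi (0:ℝ)))) ?_
  filter_upwards [self_mem_nhdsWithin] with δ (hδ : δ ∈ Ioi (0:ℝ))
  rw [cthickening_closedBall hδ.le hr0, add_comm]
  exact key δ hδ

theorem stmt5 {d : ℕ} (P Q : Measure (EuclideanSpace ℝ (Fin d)))
    [IsProbabilityMeasure P] [IsProbabilityMeasure Q]
    (p ε C : ℝ) (hp : p ∈ Set.Ioo (0:ℝ) 1) (hε : 0 < ε) (hC : 0 < C)
    (hi : ∀ (x : EuclideanSpace ℝ (Fin d)) (r : ℝ),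
      p + ε ≤ (P (closedBall x r)).toReal → p ≤ (Q (closedBall x r)).toReal)
    (hreg : ∀ (x : EuclideanSpace ℝ (Fin d)) (η : ℝ),
      |(P (closedBall x (rad P p x + η))).toReal - (P (closedBall x (rad P p x))).toReal| ≤ ε →
        |η| < C * ε) :
    ∀ x : EuclideanSpace ℝ (Fin d), rad Q p x ≤ rad P p x + C * ε := by
  intro x
  have hr0 : 0 ≤ rad P p x :=
    le_csInf (rad_nonempty P p hp.2 x) fun r hr => hr.1.le
  have hmemP := rad_mem P p hp.2 x
  have hCε : 0 < C * ε := by positivity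
  have hbig : p + ε ≤ (P (closedBall x (rad P p x + C * ε))).toReal := by
    by_contra hlt
    push_neg at hlt
    have hmono : (P (closedBall x (rad P p x))).toReal
        ≤ (P (closedBall x (rad P p x + C * ε))).toReal :=
      ENNReal.toReal_mono (measure_ne_top _ _)
        (measure_mono (closedBall_subset_closedBall (by linarith)))
    have habs : |(P (closedBall x (rad P p x + C * ε))).toReal
        - (P (closedBall x (rad P p x))).toReal| ≤ ε := by
      rw [abs_of_nonneg (by linarith)]; linarith
    have := hreg x (C * ε) habs
    rw [abs_of_pos hCε] at this
    exact lt_irrefl _ this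
  have hQ := hi x _ hbig
  exact csInf_le ⟨0, fun r hr => hr.1.le⟩ ⟨by linarith, hQ⟩
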